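/- arXiv:2105.13513 — 2 statements merged into one kernel-verified Lean document; each statement's English description precedes it below -/
import Mathlib

section
/- Let L be a positive integer and let p_1, ..., p_k (with k ≥ 2) be distinct odd primes, each dividing the Fibonacci number F_L, such that for each i, p_i ≡ 1 (mod L) or p_i ≡ -1 (mod L). Then the product P = p_1 · p_2 · ... · p_k satisfies P ≡ (5/P) (mod L), where (5/P) denotes the Jacobi symbol; equivalently, L divides P - (5/P). -/
open Nat

private lemma binet {K : Type*} [Field K] (s : K) (hs : s * s = 5) (h2 : (2:K) ≠ 0) :
    ∀ n : ℕ, s * (Nat.fib n : K) = ((1+s)/2)^n - ((1-s)/2)^n := by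
  have key : ∀ t : K, t * t = 5 → ((1+t)/2)^2 = (1+t)/2 + 1 := by
    intro t ht
    field_simp
    linear_combination ht
  intro n
  induction n using Nat.twoStepInduction with
  | zero => simp
  | one =>
    simp only [Nat.fib_one, Nat.cast_one, mul_one, pow_one]
    field_simp
    ring
  | more n ih1 ih2 =>
    have hφ : ((1+s)/2)^(n+2) = ((1+s)/2)^(n+1) + ((1+s)/2)^n := by
      calc ((1+s)/2)^(n+2) = ((1+s)/2)^n * ((1+s)/2)^2 := by ring
      _ = ((1+s)/2)^n * ((1+s)/2 + 1) := by rw [key s hs]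
      _ = ((1+s)/2)^(n+1) + ((1+s)/2)^n := by ring
    have hs' : (-s) * (-s) = 5 := by linear_combination hs
    have hψ : ((1-s)/2)^(n+2) = ((1-s)/2)^(n+1) + ((1-s)/2)^n := by
      have := key (-s) hs'
      calc ((1-s)/2)^(n+2) = ((1+(-s))/2)^n * ((1+(-s))/2)^2 := by ring_nf
      _ = ((1+(-s))/2)^n * ((1+(-s))/2 + 1) := by rw [this]
      _ = ((1-s)/2)^(n+1) + ((1-s)/2)^n := by ring_nf
    rw [Nat.fib_add_two]
    push_cast
    rw [mul_add, ih1, ih2, hφ, hψ]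
    ring


private lemma key1 (p : ℕ) [hp : Fact p.Prime] (hodd : Odd p)
    (h : legendreSym p 5 = 1) : p ∣ Nat.fib (p - 1) := by
  have h5 : ((5:ℤ) : ZMod p) ≠ 0 := by
    intro h0
    rw [(legendreSym.eq_zero_iff p 5).mpr h0] at h
    norm_num at h
  have h5' : (5 : ZMod p) ≠ 0 := by exact_mod_cast h5
  have h2 : (2 : ZMod p) ≠ 0 := by
    intro h0
    have hd : p ∣ 2 := (ZMod.natCast_eq_zero_iff 2 p).mp (by exact_mod_cast h0)
    have := (Nat.prime_dvd_prime_iff_eq hp.out Nat.prime_two).mp hd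
    subst this
    simp [Nat.odd_iff] at hodd
  obtain ⟨s, hs⟩ := (legendreSym.eq_one_iff p h5).mp h
  have hs' : s * s = 5 := by
    have h55 : ((5:ℤ) : ZMod p) = (5 : ZMod p) := by push_cast; ring
    rw [h55] at hs; exact hs.symm
  have hb := binet s hs' h2 (p - 1)
  have hsne : s ≠ 0 := by rintro rfl; simp at hs'; exact h5' hs'.symm
  have hφψ : ((1+s)/2) * ((1-s)/2) = -1 := by
    field_simp
    linear_combination -hs'
  have hφ : (1+s)/2 ≠ 0 := by
    intro h0; rw [h0, zero_mul] at hφψ; exact one_ne_zero (neg_eq_zero.mp hφψ.symm)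
  have hψ : (1-s)/2 ≠ 0 := by
    intro h0; rw [h0, mul_zero] at hφψ; exact one_ne_zero (neg_eq_zero.mp hφψ.symm)
  rw [ZMod.pow_card_sub_one_eq_one hφ, ZMod.pow_card_sub_one_eq_one hψ, sub_self] at hb
  have hf0 : (Nat.fib (p-1) : ZMod p) = 0 := by
    rcases mul_eq_zero.mp hb with h' | h'
    · exact absurd h' hsne
    · exact h'
  exact (ZMod.natCast_eq_zero_iff _ p).mp hf0

private lemma key2 (p : ℕ) [hp : Fact p.Prime] (hodd : Odd p)
    (h : legendreSym p 5 = -1) : p ∣ Nat.fib (p + 1) := by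
  have hp2 : p ≠ 2 := by rintro rfl; simp [Nat.odd_iff] at hodd
  have h5z : ((5:ℤ) : ZMod p) ≠ 0 := by
    intro h0
    rw [(legendreSym.eq_zero_iff p 5).mpr h0] at h
    norm_num at h
  have h5' : (5 : ZMod p) ≠ 0 := by exact_mod_cast h5z
  set F := GaloisField p 2 with hF
  haveI : Finite F := Module.finite_of_finite (ZMod p)
  haveI : Fintype F := Fintype.ofFinite F
  have hcard : Fintype.card F = p ^ 2 := by
    rw [← Nat.card_eq_fintype_card]
    exact GaloisField.card p 2 (by norm_num)
  have hchar : ringChar F = p := by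
    have : CharP F p := inferInstance
    exact (ringChar.eq F p).symm ▸ rfl
  set f : ZMod p →+* F := algebraMap (ZMod p) F with hf
  have hfinj : Function.Injective f := f.injective
  have h5F : (5 : F) ≠ 0 := by
    intro h0
    apply h5'
    apply hfinj
    rw [map_zero]
    simp only [map_ofNat]
    exact h0
  have h2F : (2 : F) ≠ 0 := by
    intro h0
    have hd : p ∣ 2 := by
      have := (CharP.cast_eq_zero_iff F p 2).mp (by exact_mod_cast h0)
      exact this
    exact hp2 ((Nat.prime_dvd_prime_iff_eq hp.out Nat.prime_two).mp hd)
  obtain ⟨m, hm⟩ := hodd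
  have e1 : Fintype.card F / 2 = (p - 1) * ((p + 1) / 2) := by
    rw [hcard, hm]
    have h1 : (2*m+1)^2 = 2*(2*(m*m)+2*m)+1 := by ring
    rw [h1]
    have h2 : (2*(2*(m*m)+2*m)+1)/2 = 2*(m*m)+2*m := by omega
    have h3 : (2*m+1+1)/2 = m+1 := by omega
    rw [h2, h3]
    have : (2*m+1-1) = 2*m := by omega
    rw [this]
    ring
  have hsq : IsSquare (5 : F) := by
    rw [FiniteField.isSquare_iff (by rw [hchar]; exact hp2) h5F, e1]
    have h51 : (5 : F) ^ (p - 1) = 1 := by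
      have := ZMod.pow_card_sub_one_eq_one h5'
      have h2 := congrArg f this
      rw [map_pow, map_one] at h2
      simp only [map_ofNat] at h2
      exact h2
    rw [pow_mul, h51, one_pow]
  obtain ⟨s, hs⟩ := hsq
  have hss : s * s = 5 := hs.symm
  have hsne : s ≠ 0 := by rintro rfl; rw [mul_zero] at hss; exact h5F hss.symm
  -- Euler: (5 : F) ^ (p / 2) = -1
  have heuler : (5 : F) ^ (p / 2) = -1 := by
    have he := legendreSym.eq_pow p 5
    rw [h] at he
    have h2 := congrArg f he
    rw [map_intCast, map_pow, map_intCast] at h2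
    push_cast at h2
    exact h2.symm
  have hpodd : p = 2 * (p / 2) + 1 := by omega
  have hsp : s ^ p = -s := by
    calc s ^ p = (s * s) ^ (p / 2) * s := by
          rw [← pow_two, ← pow_mul, ← pow_succ]
          rw [← hpodd]
    _ = -s := by rw [hss, heuler]; ring
  have hfrob1 : (1 + s) ^ p = 1 - s := by
    rw [add_pow_char, one_pow, hsp]; ring
  have hfrob2 : (1 - s) ^ p = 1 + s := by
    have : (1 - s) = 1 + (-s) := by ring
    rw [this, add_pow_char, one_pow, Odd.neg_pow ⟨m, by omega⟩, hsp]; ring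
  have h2p : (2 : F) ^ p = 2 := by
    have : (2 : F) = 1 + 1 := by norm_num
    rw [this, add_pow_char, one_pow]
  have hφp : ((1 + s)/2) ^ p = (1 - s)/2 := by
    rw [div_pow, hfrob1, h2p]
  have hψp : ((1 - s)/2) ^ p = (1 + s)/2 := by
    rw [div_pow, hfrob2, h2p]
  have hprod : ((1 - s)/2) * ((1 + s)/2) = -1 := by
    have h4 : (2:F) * 2⁻¹ = 1 := mul_inv_cancel₀ h2F
    linear_combination (-((2:F)⁻¹ * 2⁻¹)) * hss - (2 * 2⁻¹ + 1) * h4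
  have hφ1 : ((1 + s)/2) ^ (p + 1) = -1 := by
    rw [pow_succ, hφp] at *
    rw [hprod]
  have hψ1 : ((1 - s)/2) ^ (p + 1) = -1 := by
    rw [pow_succ, hψp, mul_comm, hprod]
  have hb := binet s hss h2F (p + 1)
  rw [hφ1, hψ1, sub_self] at hb
  have hfib0 : (Nat.fib (p + 1) : F) = 0 := by
    rcases mul_eq_zero.mp hb with h' | h'
    · exact absurd h' hsne
    · exact h'
  have : (Nat.fib (p + 1) : ZMod p) = 0 := by
    apply hfinj
    rw [map_natCast, map_zero, hfib0]
  exact (ZMod.natCast_eq_zero_iff _ p).mp this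


private lemma jacobi_prod {ι : Type*} (a : ℤ) (s : Finset ι) (f : ι → ℕ)
    (hf : ∀ i ∈ s, f i ≠ 0) :
    jacobiSym a (∏ i ∈ s, f i) = ∏ i ∈ s, jacobiSym a (f i) := by
  classical
  induction s using Finset.induction_on with
  | empty => simp
  | @insert j t hj ih =>
    rw [Finset.prod_insert hj, Finset.prod_insert hj]
    haveI : NeZero (f j) := ⟨hf j (Finset.mem_insert_self _ _)⟩
    haveI : NeZero (∏ i ∈ t, f i) :=
      ⟨Finset.prod_ne_zero_iff.mpr fun i hi => hf i (Finset.mem_insert_of_mem hi)⟩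
    rw [jacobiSym.mul_right, ih fun i hi => hf i (Finset.mem_insert_of_mem hi)]

private lemma per_prime (L q : ℕ) (hL : 0 < L) (hq : q.Prime) (hodd : Odd q) (hq5 : q ≠ 5)
    (hdvd : q ∣ Nat.fib L)
    (hcong : (q : ℤ) ≡ 1 [ZMOD (L:ℤ)] ∨ (q : ℤ) ≡ -1 [ZMOD (L:ℤ)]) :
    (q : ℤ) ≡ jacobiSym 5 q [ZMOD (L:ℤ)] := by
  haveI : Fact q.Prime := ⟨hq⟩
  have hq2 : q ≠ 2 := by rintro rfl; simp [Nat.odd_iff] at hodd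
  have hq3 : 3 ≤ q := by have := hq.two_le; omega
  have hjl : jacobiSym 5 q = legendreSym q 5 := (jacobiSym.legendreSym.to_jacobiSym q 5).symm
  have h50 : ((5:ℤ) : ZMod q) ≠ 0 := by
    intro h0
    have : (q:ℤ) ∣ 5 := (ZMod.intCast_zmod_eq_zero_iff_dvd 5 q).mp h0
    have : q ∣ 5 := by exact_mod_cast this
    exact hq5 ((Nat.prime_dvd_prime_iff_eq hq (by norm_num)).mp this)
  have hval := legendreSym.eq_one_or_neg_one q h50
  -- contradiction helper
  have contra : ∀ m : ℕ, q ∣ Nat.fib m → Nat.gcd L m ∣ 2 → False := by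
    intro m hm hg2
    have hgpos : 0 < Nat.gcd L m := Nat.gcd_pos_of_pos_left m hL
    have hqg : q ∣ Nat.fib (Nat.gcd L m) := by
      rw [Nat.fib_gcd]; exact Nat.dvd_gcd hdvd hm
    have hle : Nat.gcd L m ≤ 2 := Nat.le_of_dvd (by norm_num) hg2
    interval_cases h : (Nat.gcd L m) <;> simp_all
  rcases hval with h1 | h1 <;> rcases hcong with h2 | h2
  · rw [hjl, h1]; exact h2
  · -- leg = 1, q ≡ -1 : contradiction
    exfalso
    have hm := key1 q hodd h1
    have hLd : L ∣ q + 1 := by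
      have hd := h2.dvd
      have : (L:ℤ) ∣ (q:ℤ) + 1 := by
        have : ((-1:ℤ) - q) = -((q:ℤ)+1) := by ring
        rw [this] at hd
        exact (dvd_neg.mp hd)
      exact_mod_cast this
    apply contra (q - 1) hm
    have ha : Nat.gcd L (q-1) ∣ q + 1 := dvd_trans (Nat.gcd_dvd_left _ _) hLd
    have hb : Nat.gcd L (q-1) ∣ q - 1 := Nat.gcd_dvd_right _ _
    have := Nat.dvd_sub ha hb
    have he : q + 1 - (q - 1) = 2 := by omega
    rwa [he] at this
  · -- leg = -1, q ≡ 1 : contradiction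
    exfalso
    have hm := key2 q hodd h1
    have hLd : L ∣ q - 1 := by
      have hd := h2.dvd
      have : (L:ℤ) ∣ ((q - 1 : ℕ) : ℤ) := by
        have hcast : ((q - 1 : ℕ) : ℤ) = (q:ℤ) - 1 := by
          have : 1 ≤ q := hq.one_lt.le
          push_cast [this]; ring
        rw [hcast]
        have : ((1:ℤ) - q) = -((q:ℤ) - 1) := by ring
        rw [this] at hd
        exact dvd_neg.mp hd
      exact_mod_cast this
    apply contra (q + 1) hm
    have ha : Nat.gcd L (q+1) ∣ q - 1 := dvd_trans (Nat.gcd_dvd_left _ _) hLd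
    have hb : Nat.gcd L (q+1) ∣ q + 1 := Nat.gcd_dvd_right _ _
    have := Nat.dvd_sub hb ha
    have he : q + 1 - (q - 1) = 2 := by omega
    rwa [he] at this
  · rw [hjl, h1]; exact h2


/-- Let `L` be a positive integer and `p 0, …, p (k-1)` (with `k ≥ 2`) distinct odd
primes, each dividing the Fibonacci number `F L`, such that each `p i ≡ ±1 (mod L)`.
Then `P = ∏ i, p i` satisfies `P ≡ (5/P) (mod L)`, where `(5/P)` is the Jacobi symbol. -/
theorem product_of_special_fib_factors_congruent_jacobi
    (L k : ℕ) (hL : 0 < L) (hk : 2 ≤ k) (p : Fin k → ℕ)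
    (hinj : Function.Injective p)
    (hprime : ∀ i, (p i).Prime) (hodd : ∀ i, Odd (p i))
    (hdvd : ∀ i, p i ∣ Nat.fib L)
    (hcong : ∀ i, (p i : ℤ) ≡ 1 [ZMOD (L : ℤ)] ∨ (p i : ℤ) ≡ -1 [ZMOD (L : ℤ)]) :
    ((∏ i, p i : ℕ) : ℤ) ≡ jacobiSym 5 (∏ i, p i) [ZMOD (L : ℤ)] := by
  have hne5 : ∀ i, p i ≠ 5 := by
    intro i hi
    have hd := hdvd i
    have hc := hcong i
    rw [hi] at hd hc
    have h46 : L ∣ 4 ∨ L ∣ 6 := by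
      rcases hc with h | h
      · left
        have hdd := h.dvd
        have h4 : (L:ℤ) ∣ 4 := by
          have he : ((1:ℤ) - ((5:ℕ):ℤ)) = -4 := by norm_num
          rw [he] at hdd
          exact dvd_neg.mp hdd
        exact_mod_cast h4
      · right
        have hdd := h.dvd
        have h6 : (L:ℤ) ∣ 6 := by
          have he : ((-1:ℤ) - ((5:ℕ):ℤ)) = -6 := by norm_num
          rw [he] at hdd
          exact dvd_neg.mp hdd
        exact_mod_cast h6
    have hle : L ≤ 6 := by
      rcases h46 with h | h
      · exact le_trans (Nat.le_of_dvd (by norm_num) h) (by norm_num)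
      · exact Nat.le_of_dvd (by norm_num) h
    interval_cases L <;> first
      | (revert hd; decide)
      | (revert h46; decide)
  have hper : ∀ i, (p i : ℤ) ≡ jacobiSym 5 (p i) [ZMOD (L:ℤ)] :=
    fun i => per_prime L (p i) hL (hprime i) (hodd i) (hne5 i) (hdvd i) (hcong i)
  rw [← ZMod.intCast_eq_intCast_iff]
  rw [jacobi_prod 5 Finset.univ p (fun i _ => (hprime i).ne_zero)]
  push_cast
  exact Finset.prod_congr rfl fun i _ => by
    have hi := hper i
    rw [← ZMod.intCast_eq_intCast_iff] at hi
    exact_mod_cast hi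
end

section
/- For every odd prime p, p divides the Fibonacci number F_{p - (5/p)}, where (5/p) denotes the Legendre symbol of 5 modulo p (so the index is p - 1 if p ≡ ±1 (mod 5), p + 1 if p ≡ ±2 (mod 5), and p if p = 5). -/
open Polynomial

/-- Scaled Binet formula: if `r ^ 2 = 5` in a commutative ring, then
`(1+r)^n - (1-r)^n = 2^n * r * fib n`. -/
lemma binet_aux {R : Type*} [CommRing R] (r : R) (hr : r ^ 2 = 5) :
    ∀ n : ℕ, (1 + r) ^ n - (1 - r) ^ n = 2 ^ n * r * (Nat.fib n : R) := by
  intro n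
  induction n using Nat.twoStepInduction with
  | zero => simp
  | one => simp; ring
  | more n ih0 ih1 =>
      rw [Nat.fib_add_two]
      push_cast
      linear_combination 2 * ih1 + 4 * ih0 + ((1 + r) ^ n - (1 - r) ^ n) * hr

/-- For every odd prime `p`, `p ∣ F (p - (5/p))`, where `(5/p)` is the Legendre symbol
of `5` modulo `p`. -/
theorem odd_prime_dvd_fib_sub_legendre
    (p : ℕ) [Fact p.Prime] (hodd : Odd p) :
    p ∣ Nat.fib ((p : ℤ) - legendreSym p 5).toNat := by
  have hp : p.Prime := Fact.out
  have hp2 : p ≠ 2 := by rintro rfl; exact (Nat.not_odd_iff_even.mpr even_two) hodd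
  have hp1 : 1 ≤ p := hp.one_lt.le
  rcases eq_or_ne ((5 : ZMod p)) 0 with h5 | h5
  · -- p = 5 case
    have hp5 : p = 5 := by
      have hd : (p : ℕ) ∣ 5 := (ZMod.natCast_eq_zero_iff 5 p).mp (by exact_mod_cast h5)
      exact (Nat.prime_dvd_prime_iff_eq hp (by norm_num)).mp hd
    have hleg : legendreSym p 5 = 0 := (legendreSym.eq_zero_iff p 5).mpr (by exact_mod_cast h5)
    rw [hleg, hp5]
    norm_num
    decide
  · -- p ≠ 5; work in AdjoinRoot (X^2 - 5) over ZMod p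
    set f : (ZMod p)[X] := X ^ 2 - C 5 with hf
    have hdeg : f.degree = 2 := by
      rw [hf]
      compute_degree!
    haveI : Nontrivial (AdjoinRoot f) := AdjoinRoot.nontrivial f (by rw [hdeg]; norm_num)
    haveI : CharP (AdjoinRoot f) p :=
      charP_of_injective_algebraMap (algebraMap (ZMod p) (AdjoinRoot f)).injective p
    set r : AdjoinRoot f := AdjoinRoot.root f with hrdef
    have hr : r ^ 2 = 5 := by
      have := AdjoinRoot.isRoot_root f
      rw [hf] at this
      have h5of : (AdjoinRoot.of (X ^ 2 - C 5 : (ZMod p)[X])) 5 = 5 := map_ofNat _ 5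
      simpa [IsRoot, sub_eq_zero, h5of] using this
    -- units
    have h5u : IsUnit ((5 : ZMod p)) := (Ne.isUnit h5)
    have h5Ru : IsUnit ((5 : AdjoinRoot f)) := by
      have h := h5u.map (algebraMap (ZMod p) (AdjoinRoot f))
      rwa [map_ofNat] at h
    have hru : IsUnit r := by
      apply isUnit_of_mul_isUnit_left (y := r)
      rw [← sq, hr]; exact h5Ru
    have h2u : IsUnit ((2 : AdjoinRoot f)) := by
      have h2 : ((2 : ZMod p)) ≠ 0 := by
        intro h
        have : (p : ℕ) ∣ 2 := by
          exact_mod_cast (ZMod.natCast_eq_zero_iff 2 p).mp (by exact_mod_cast h)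
        exact hp2 ((Nat.prime_dvd_prime_iff_eq hp Nat.prime_two).mp this)
      have h := (Ne.isUnit h2).map (algebraMap (ZMod p) (AdjoinRoot f))
      rwa [map_ofNat] at h
    -- Frobenius: r ^ p = ε * r where ε = legendreSym p 5
    have hpodd : p = 2 * (p / 2) + 1 := by
      have := Nat.div_add_mod p 2
      have hm : p % 2 = 1 := Nat.odd_iff.mp hodd
      omega
    have heuler : ((5 : AdjoinRoot f)) ^ (p / 2) = ((legendreSym p 5 : ℤ) : AdjoinRoot f) := by
      have h := congrArg (algebraMap (ZMod p) (AdjoinRoot f)) (legendreSym.eq_pow p 5)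
      rw [map_intCast, map_pow, map_intCast] at h
      norm_num at h ⊢
      exact h.symm
    have hrp : r ^ p = ((legendreSym p 5 : ℤ) : AdjoinRoot f) * r := by
      have h1 : r ^ p = r ^ (2 * (p / 2) + 1) := congrArg (fun n => r ^ n) hpodd
      rw [h1, pow_succ, pow_mul, hr, heuler]
    have hfrob1 : (1 + r) ^ p = 1 + r ^ p := by
      rw [add_pow_char]
      norm_num
    have hfrob2 : (1 - r) ^ p = 1 - r ^ p := by
      rw [sub_pow_char]
      norm_num
    -- case on the Legendre symbol
    rcases legendreSym.eq_one_or_neg_one p (a := 5) (by exact_mod_cast h5) with hleg | hleg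
    · -- ε = 1 : show p ∣ fib (p - 1)
      rw [hleg]
      have hn : ((p : ℤ) - (1 : ℤ)).toNat = p - 1 := by omega
      rw [hn]
      rw [← CharP.cast_eq_zero_iff (AdjoinRoot f) p]
      have hrr : r ^ p = r := by rw [hrp, hleg]; norm_num
      have e1 : (1 + r) ^ (p - 1) * (1 + r) = 1 * (1 + r) := by
        rw [one_mul, ← pow_succ, Nat.sub_add_cancel hp1, hfrob1, hrr]
      have e2 : (1 - r) ^ (p - 1) * (1 - r) = 1 * (1 - r) := by
        rw [one_mul, ← pow_succ, Nat.sub_add_cancel hp1, hfrob2, hrr]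
      have hu1 : IsUnit (1 + r) := by
        apply isUnit_of_mul_isUnit_left (y := 1 - r)
        have : (1 + r) * (1 - r) = -(2 * 2) := by linear_combination -hr
        rw [this]
        exact (h2u.mul h2u).neg
      have hu2 : IsUnit (1 - r) := by
        apply isUnit_of_mul_isUnit_left (y := 1 + r)
        have : (1 - r) * (1 + r) = -(2 * 2) := by linear_combination -hr
        rw [this]
        exact (h2u.mul h2u).neg
      have e1' : (1 + r) ^ (p - 1) = 1 := hu1.mul_right_cancel e1
      have e2' : (1 - r) ^ (p - 1) = 1 := hu2.mul_right_cancel e2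
      have hb := binet_aux r hr (p - 1)
      rw [e1', e2', sub_self] at hb
      have := ((h2u.pow (p - 1)).mul hru).mul_right_eq_zero.mp hb.symm
      exact this
    · -- ε = -1 : show p ∣ fib (p + 1)
      rw [hleg]
      have hn : ((p : ℤ) - (-1 : ℤ)).toNat = p + 1 := by omega
      rw [hn]
      rw [← CharP.cast_eq_zero_iff (AdjoinRoot f) p]
      have hrr : r ^ p = -r := by rw [hrp, hleg]; norm_num
      have e1 : (1 + r) ^ (p + 1) = -(2 * 2) := by
        rw [pow_succ, hfrob1, hrr]
        linear_combination -hr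
      have e2 : (1 - r) ^ (p + 1) = -(2 * 2) := by
        rw [pow_succ, hfrob2, hrr]
        linear_combination -hr
      have hb := binet_aux r hr (p + 1)
      rw [e1, e2, sub_self] at hb
      exact ((h2u.pow (p + 1)).mul hru).mul_right_eq_zero.mp hb.symm
end
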